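/- Assume f : 𝒳ⁿ × ℝᵐ → ℝⁿ is Lipschitz on bounded sets with f(0,0) = 0, and let V : 𝒳ⁿ → [0,∞) be locally Lipschitz. Let x₀ ∈ 𝒳ⁿ, let u be an input, and let x be the maximal solution of ẋ(t) = f(x_t, u(t)) on [0, t_max). Define ν : [0, t_max) → [0,∞) by ν(t) := V(x_t) and its upper right Dini derivative 𝒟⁺ν(t) := limsup_{h→0⁺} (ν(t+h) − ν(t))/h. Then for almost every t ∈ [0, t_max), 𝒟⁺ν(t) = D⁺V(x_t, f(x_t, u(t))). -/

import Mathlib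

open Set Filter MeasureTheory Topology
open scoped NNReal

noncomputable section

/-- `ℝⁿ` with the Euclidean norm. -/
abbrev Vec (n : ℕ) : Type := EuclideanSpace ℝ (Fin n)

/-- The state space `𝒳ⁿ = C([-Δ,0], ℝⁿ)`, equipped with the sup norm. -/
abbrev Hist (Δ : ℝ≥0) (n : ℕ) : Type :=
  ContinuousMap (Icc (-(Δ : ℝ)) (0 : ℝ)) (Vec n)

theorem zero_mem_IccD (Δ : ℝ≥0) : (0 : ℝ) ∈ Icc (-(Δ : ℝ)) (0 : ℝ) :=
  ⟨neg_nonpos.mpr Δ.coe_nonneg, le_refl 0⟩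

/-- `φ(0)`: the current value of a history segment. -/
def ev0 {Δ : ℝ≥0} {n : ℕ} (φ : Hist Δ n) : Vec n :=
  φ ⟨0, zero_mem_IccD Δ⟩

/-! ### Comparison functions -/

/-- Class `𝒦`: continuous, strictly increasing, zero at zero (on `[0,∞)`). -/
def ClassK (α : ℝ → ℝ) : Prop :=
  ContinuousOn α (Ici 0) ∧ StrictMonoOn α (Ici 0) ∧ α 0 = 0

/-- Class `𝒦∞`: class `𝒦` and unbounded. -/
def ClassKinf (α : ℝ → ℝ) : Prop :=
  ClassK α ∧ Tendsto α atTop atTop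

/-- Class `𝒩`: continuous, nondecreasing, zero at zero (on `[0,∞)`). -/
def ClassN (α : ℝ → ℝ) : Prop :=
  ContinuousOn α (Ici 0) ∧ MonotoneOn α (Ici 0) ∧ α 0 = 0

/-- Class `𝒫`: continuous, zero at zero, positive on `(0,∞)`. -/
def ClassP (α : ℝ → ℝ) : Prop :=
  ContinuousOn α (Ici 0) ∧ α 0 = 0 ∧ ∀ s : ℝ, 0 < s → 0 < α s

/-- Class `𝒦ℒ`. -/
def ClassKL (β : ℝ → ℝ → ℝ) : Prop :=
  (∀ t : ℝ, 0 ≤ t → ClassK fun s => β s t) ∧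
    ∀ s : ℝ, 0 ≤ s →
      ContinuousOn (β s) (Ici 0) ∧ AntitoneOn (β s) (Ici 0) ∧
        Tendsto (β s) atTop (𝓝 0)

/-! ### Inputs -/

/-- Admissible input: Lebesgue measurable and locally essentially bounded. -/
def IsInput {m : ℕ} (u : ℝ → Vec m) : Prop :=
  Measurable u ∧ ∀ T : ℝ, 0 < T → ∃ C : ℝ, ∀ᵐ t ∂volume, t ∈ Icc (0 : ℝ) T → ‖u t‖ ≤ C

/-- Essential supremum of `‖u‖` over a set of times. -/
def essBnd {m : ℕ} (u : ℝ → Vec m) (s : Set ℝ) : ℝ :=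
  sInf {C : ℝ | 0 ≤ C ∧ ∀ᵐ τ ∂volume, τ ∈ s → ‖u τ‖ ≤ C}

/-! ### History segments along a trajectory -/

-- The history segment `x_t ∈ 𝒳ⁿ` of a trajectory `x : ℝ → ℝⁿ` (with junk value `0`
-- when `x` is not continuous on `[t-Δ, t]`).
open Classical in
def seg (Δ : ℝ≥0) {n : ℕ} (x : ℝ → Vec n) (t : ℝ) : Hist Δ n :=
  if hx : ContinuousOn x (Icc (t - (Δ : ℝ)) t) then
    { toFun := fun τ => x (t + τ.1)
      continuous_toFun := by
        have h1 : Continuous fun τ : Icc (-(Δ : ℝ)) (0 : ℝ) => t + τ.1 :=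
          continuous_const.add continuous_subtype_val
        have h2 : ∀ τ : Icc (-(Δ : ℝ)) (0 : ℝ), t + τ.1 ∈ Icc (t - (Δ : ℝ)) t := by
          rintro ⟨τ, hτ⟩
          rw [mem_Icc] at hτ ⊢
          constructor
          · linarith [hτ.1]
          · linarith [hτ.2]
        exact hx.comp_continuous h1 h2 }
  else 0

/-! ### Driver's derivative and Dini derivative -/

/-- The deformed history `φ_{h,w}` appearing in Driver's derivative: for `0 ≤ h < Δ`,
`φ_{h,w}(s) = φ(s+h)` for `s ∈ [-Δ,-h)` and `φ_{h,w}(s) = φ(0) + w(h+s)` for `s ∈ [-h,0]`. -/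
def shiftSeg {Δ : ℝ≥0} {n : ℕ} (φ : Hist Δ n) (w : Vec n) (h : ℝ) : Hist Δ n :=
  { toFun := fun s =>
      φ (projIcc (-(Δ : ℝ)) 0 (neg_nonpos.mpr Δ.coe_nonneg) (s.1 + h)) + max (h + s.1) 0 • w
    continuous_toFun := by
      refine Continuous.add ?_ ?_
      · exact φ.continuous.comp (continuous_projIcc.comp
          (continuous_subtype_val.add continuous_const))
      · exact ((continuous_const.add continuous_subtype_val).max continuous_const).smul
          continuous_const }

/-- Driver's derivative `D⁺V(φ,w)`, valued in the extended reals. -/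
def driverD {Δ : ℝ≥0} {n : ℕ} (V : Hist Δ n → ℝ) (φ : Hist Δ n) (w : Vec n) : EReal :=
  limsup (fun h : ℝ => (((V (shiftSeg φ w h) - V φ) / h : ℝ) : EReal)) (𝓝[>] (0 : ℝ))

/-- Upper right-hand Dini derivative of `ν : ℝ → ℝ`, valued in the extended reals. -/
def diniD (ν : ℝ → ℝ) (t : ℝ) : EReal :=
  limsup (fun h : ℝ => (((ν (t + h) - ν t) / h : ℝ) : EReal)) (𝓝[>] (0 : ℝ))

/-! ### Lipschitz conditions -/

/-- `f : 𝒳ⁿ × ℝᵐ → ℝⁿ` is Lipschitz on bounded sets. -/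
def LipOnBounded {Δ : ℝ≥0} {n m : ℕ} (f : Hist Δ n → Vec m → Vec n) : Prop :=
  ∀ r : ℝ, 0 < r → ∃ L : ℝ, 0 < L ∧
    ∀ (φ₁ φ₂ : Hist Δ n) (v₁ v₂ : Vec m),
      ‖φ₁‖ ≤ r → ‖φ₂‖ ≤ r → ‖v₁‖ ≤ r → ‖v₂‖ ≤ r →
        ‖f φ₁ v₁ - f φ₂ v₂‖ ≤ L * (‖φ₁ - φ₂‖ + ‖v₁ - v₂‖)

/-- An input-free vector field `f₀ : 𝒳ⁿ → ℝⁿ` Lipschitz on bounded sets. -/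
def LipOnBounded₀ {Δ : ℝ≥0} {n : ℕ} (f₀ : Hist Δ n → Vec n) : Prop :=
  ∀ r : ℝ, 0 < r → ∃ L : ℝ, 0 < L ∧
    ∀ φ₁ φ₂ : Hist Δ n, ‖φ₁‖ ≤ r → ‖φ₂‖ ≤ r → ‖f₀ φ₁ - f₀ φ₂‖ ≤ L * ‖φ₁ - φ₂‖

/-- A functional `V : 𝒳ⁿ → ℝ` Lipschitz on bounded sets. -/
def LipOnBoundedV {Δ : ℝ≥0} {n : ℕ} (V : Hist Δ n → ℝ) : Prop :=
  ∀ r : ℝ, 0 < r → ∃ L : ℝ, 0 < L ∧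
    ∀ φ₁ φ₂ : Hist Δ n, ‖φ₁‖ ≤ r → ‖φ₂‖ ≤ r → |V φ₁ - V φ₂| ≤ L * ‖φ₁ - φ₂‖

/-- A functional `V : 𝒳ⁿ → ℝ` locally Lipschitz. -/
def LocallyLipV {Δ : ℝ≥0} {n : ℕ} (V : Hist Δ n → ℝ) : Prop :=
  ∀ φ : Hist Δ n, ∃ δ : ℝ, 0 < δ ∧ ∃ L : ℝ, 0 < L ∧
    ∀ φ₁ φ₂ : Hist Δ n, ‖φ₁ - φ‖ ≤ δ → ‖φ₂ - φ‖ ≤ δ → |V φ₁ - V φ₂| ≤ L * ‖φ₁ - φ₂‖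

/-! ### Solutions -/

/-- `x` is a solution of `ẋ(t) = f(x_t, u(t))` with initial state `x₀` on `[0, tmax)`. -/
structure IsSolution (Δ : ℝ≥0) {n m : ℕ} (f : Hist Δ n → Vec m → Vec n)
    (u : ℝ → Vec m) (x₀ : Hist Δ n) (tmax : EReal) (x : ℝ → Vec n) : Prop where
  tmax_pos : 0 < tmax
  cont : ContinuousOn x {s : ℝ | -(Δ : ℝ) ≤ s ∧ (s : EReal) < tmax}
  init : ∀ τ : Icc (-(Δ : ℝ)) (0 : ℝ), x τ.1 = x₀ τ
  integrable : ∀ t : ℝ, 0 ≤ t → (t : EReal) < tmax →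
    IntervalIntegrable (fun s => f (seg Δ x s) (u s)) volume 0 t
  integral_eq : ∀ t : ℝ, 0 ≤ t → (t : EReal) < tmax →
    x t = x 0 + ∫ s in (0:ℝ)..t, f (seg Δ x s) (u s)

/-- Maximal solution: a solution admitting no proper extension. -/
def IsMaxSolution (Δ : ℝ≥0) {n m : ℕ} (f : Hist Δ n → Vec m → Vec n)
    (u : ℝ → Vec m) (x₀ : Hist Δ n) (tmax : EReal) (x : ℝ → Vec n) : Prop :=
  IsSolution Δ f u x₀ tmax x ∧
    ∀ (tmax' : EReal) (x' : ℝ → Vec n), IsSolution Δ f u x₀ tmax' x' →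
      (∀ t : ℝ, -(Δ : ℝ) ≤ t → (t : EReal) < tmax → x' t = x t) → tmax' ≤ tmax

/-- Solution of the input-free system `ẋ(t) = f₀(x_t)`. -/
def IsSolution₀ (Δ : ℝ≥0) {n : ℕ} (f₀ : Hist Δ n → Vec n) (x₀ : Hist Δ n)
    (tmax : EReal) (x : ℝ → Vec n) : Prop :=
  IsSolution Δ (fun φ (_ : Vec 0) => f₀ φ) (fun _ => 0) x₀ tmax x

/-- Maximal solution of the input-free system `ẋ(t) = f₀(x_t)`. -/
def IsMaxSolution₀ (Δ : ℝ≥0) {n : ℕ} (f₀ : Hist Δ n → Vec n) (x₀ : Hist Δ n)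
    (tmax : EReal) (x : ℝ → Vec n) : Prop :=
  IsMaxSolution Δ (fun φ (_ : Vec 0) => f₀ φ) (fun _ => 0) x₀ tmax x

/-! ### Stability properties (input-free systems) -/

/-- Global asymptotic stability (GAS). -/
def GAS (Δ : ℝ≥0) {n : ℕ} (f₀ : Hist Δ n → Vec n) : Prop :=
  ∃ β : ℝ → ℝ → ℝ, ClassKL β ∧
    ∀ (x₀ : Hist Δ n) (tmax : EReal) (x : ℝ → Vec n),
      IsMaxSolution₀ Δ f₀ x₀ tmax x →
        tmax = ⊤ ∧ ∀ t : ℝ, 0 ≤ t → ‖x t‖ ≤ β ‖x₀‖ t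

/-- Global exponential stability (GES). -/
def GES (Δ : ℝ≥0) {n : ℕ} (f₀ : Hist Δ n → Vec n) : Prop :=
  ∃ k : ℝ, 1 ≤ k ∧ ∃ lam : ℝ, 0 < lam ∧
    ∀ (x₀ : Hist Δ n) (tmax : EReal) (x : ℝ → Vec n),
      IsMaxSolution₀ Δ f₀ x₀ tmax x →
        tmax = ⊤ ∧ ∀ t : ℝ, 0 ≤ t → ‖x t‖ ≤ k * ‖x₀‖ * Real.exp (-lam * t)

/-- (Local) asymptotic stability (AS) of the origin. -/
def AS (Δ : ℝ≥0) {n : ℕ} (f₀ : Hist Δ n → Vec n) : Prop :=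
  ∃ r : ℝ, 0 < r ∧ ∃ β : ℝ → ℝ → ℝ, ClassKL β ∧
    ∀ (x₀ : Hist Δ n) (tmax : EReal) (x : ℝ → Vec n),
      IsMaxSolution₀ Δ f₀ x₀ tmax x → ‖x₀‖ ≤ r →
        tmax = ⊤ ∧ ∀ t : ℝ, 0 ≤ t → ‖x t‖ ≤ β ‖x₀‖ t

/-- (Local) exponential stability (ES) of the origin. -/
def ES (Δ : ℝ≥0) {n : ℕ} (f₀ : Hist Δ n → Vec n) : Prop :=
  ∃ r : ℝ, 0 < r ∧ ∃ k : ℝ, 1 ≤ k ∧ ∃ lam : ℝ, 0 < lam ∧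
    ∀ (x₀ : Hist Δ n) (tmax : EReal) (x : ℝ → Vec n),
      IsMaxSolution₀ Δ f₀ x₀ tmax x → ‖x₀‖ ≤ r →
        tmax = ⊤ ∧ ∀ t : ℝ, 0 ≤ t → ‖x t‖ ≤ k * ‖x₀‖ * Real.exp (-lam * t)

/-! ### Forward completeness -/

/-- Robust forward completeness (RFC) of `ẋ(t) = f(x_t,u(t))`. -/
def RFC (Δ : ℝ≥0) {n m : ℕ} (f : Hist Δ n → Vec m → Vec n) : Prop :=
  (∀ (x₀ : Hist Δ n) (u : ℝ → Vec m) (tmax : EReal) (x : ℝ → Vec n),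
      IsInput u → IsMaxSolution Δ f u x₀ tmax x → tmax = ⊤) ∧
    ∀ T : ℝ, 0 < T → ∀ r : ℝ, 0 < r → ∃ C : ℝ,
      ∀ (x₀ : Hist Δ n) (u : ℝ → Vec m) (tmax : EReal) (x : ℝ → Vec n),
        IsInput u → IsMaxSolution Δ f u x₀ tmax x →
          ‖x₀‖ ≤ r → essBnd u (Ici 0) ≤ r →
            ∀ t : ℝ, t ∈ Icc (0 : ℝ) T → ‖seg Δ x t‖ ≤ C

/-- Robust forward completeness of the input-free system `ẋ(t) = f₀(x_t)`. -/
def RFC₀ (Δ : ℝ≥0) {n : ℕ} (f₀ : Hist Δ n → Vec n) : Prop :=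
  RFC Δ (fun φ (_ : Vec 0) => f₀ φ)

/-! ### Input-to-state stability notions -/

/-- Input-to-state stability (ISS). -/
def ISS (Δ : ℝ≥0) {n m : ℕ} (f : Hist Δ n → Vec m → Vec n) : Prop :=
  ∃ β : ℝ → ℝ → ℝ, ∃ μ : ℝ → ℝ, ClassKL β ∧ ClassN μ ∧
    ∀ (x₀ : Hist Δ n) (u : ℝ → Vec m) (tmax : EReal) (x : ℝ → Vec n),
      IsInput u → IsMaxSolution Δ f u x₀ tmax x →
        tmax = ⊤ ∧ ∀ t : ℝ, 0 ≤ t → ‖x t‖ ≤ β ‖x₀‖ t + μ (essBnd u (Icc 0 t))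

/-- Local input-to-state stability (LISS). -/
def LISS (Δ : ℝ≥0) {n m : ℕ} (f : Hist Δ n → Vec m → Vec n) : Prop :=
  ∃ r : ℝ, 0 < r ∧ ∃ β : ℝ → ℝ → ℝ, ∃ μ : ℝ → ℝ, ClassKL β ∧ ClassN μ ∧
    ∀ (x₀ : Hist Δ n) (u : ℝ → Vec m) (tmax : EReal) (x : ℝ → Vec n),
      IsInput u → IsMaxSolution Δ f u x₀ tmax x →
        ‖x₀‖ ≤ r → essBnd u (Ici 0) ≤ r →
          tmax = ⊤ ∧ ∀ t : ℝ, 0 ≤ t → ‖x t‖ ≤ β ‖x₀‖ t + μ (essBnd u (Icc 0 t))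

/-- Integral input-to-state stability (iISS). -/
def iISS (Δ : ℝ≥0) {n m : ℕ} (f : Hist Δ n → Vec m → Vec n) : Prop :=
  ∃ β : ℝ → ℝ → ℝ, ∃ η μ : ℝ → ℝ, ClassKL β ∧ ClassN η ∧ ClassN μ ∧
    ∀ (x₀ : Hist Δ n) (u : ℝ → Vec m) (tmax : EReal) (x : ℝ → Vec n),
      IsInput u → IsMaxSolution Δ f u x₀ tmax x →
        tmax = ⊤ ∧ ∀ t : ℝ, 0 ≤ t →
          ‖x t‖ ≤ β ‖x₀‖ t + η (∫ s in (0:ℝ)..t, μ ‖u s‖)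

/-- The UBEBS estimate with offset `c`. -/
def UBEBSwith (Δ : ℝ≥0) {n m : ℕ} (f : Hist Δ n → Vec m → Vec n) (c : ℝ) : Prop :=
  ∃ α ξ ζ : ℝ → ℝ, ClassKinf α ∧ ClassKinf ξ ∧ ClassKinf ζ ∧
    ∀ (x₀ : Hist Δ n) (u : ℝ → Vec m) (tmax : EReal) (x : ℝ → Vec n),
      IsInput u → IsMaxSolution Δ f u x₀ tmax x →
        tmax = ⊤ ∧ ∀ t : ℝ, 0 ≤ t →
          α ‖x t‖ ≤ ξ ‖x₀‖ + (∫ s in (0:ℝ)..t, ζ ‖u s‖) + c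

/-! ### Lyapunov–Krasovskii functionals -/

/-- Lyapunov–Krasovskii functional candidate (LKF). -/
def IsLKF {Δ : ℝ≥0} {n : ℕ} (V : Hist Δ n → ℝ) : Prop :=
  (∀ φ, 0 ≤ V φ) ∧ LipOnBoundedV V ∧
    ∃ α₁ α₂ : ℝ → ℝ, ClassKinf α₁ ∧ ClassKinf α₂ ∧
      ∀ φ : Hist Δ n, α₁ ‖ev0 φ‖ ≤ V φ ∧ V φ ≤ α₂ ‖φ‖

/-- Coercive Lyapunov–Krasovskii functional candidate. -/
def IsCoerciveLKF {Δ : ℝ≥0} {n : ℕ} (V : Hist Δ n → ℝ) : Prop :=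
  (∀ φ, 0 ≤ V φ) ∧ LipOnBoundedV V ∧
    ∃ α₁ α₂ : ℝ → ℝ, ClassKinf α₁ ∧ ClassKinf α₂ ∧
      ∀ φ : Hist Δ n, α₁ ‖φ‖ ≤ V φ ∧ V φ ≤ α₂ ‖φ‖

end


noncomputable def ErealAddIso (ε : ℝ) : EReal ≃o EReal where
  toFun a := a + (ε : EReal)
  invFun a := a - (ε : EReal)
  left_inv a := EReal.add_sub_cancel_right
  right_inv a := EReal.sub_add_cancel
  map_rel_iff' := by
    intro a b
    exact (EReal.addLECancellable_coe ε).add_le_add_iff_right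

lemma ErealAddIso_apply (ε : ℝ) (a : EReal) : ErealAddIso ε a = a + (ε : EReal) := rfl

lemma ereal_le_of_forall_le_add {a b : EReal} (h : ∀ ε : ℝ, 0 < ε → a ≤ b + (ε : EReal)) :
    a ≤ b := by
  by_contra h'
  push_neg at h'
  obtain ⟨q, hbq, hqa⟩ := EReal.exists_rat_btwn_of_lt h'
  induction b with
  | bot =>
    have h1 := h 1 one_pos
    rw [EReal.bot_add] at h1
    exact (h'.trans_le h1).false
  | coe b =>
    have hq : (b : ℝ) < (q : ℝ) := by exact_mod_cast hbq
    have := h ((q : ℝ) - b) (by linarith)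
    rw [show ((b : ℝ) : EReal) + (((q:ℝ) - b : ℝ) : EReal) = ((q : ℝ) : EReal) by
      norm_cast; ring] at this
    exact absurd (this.trans_lt hqa) (lt_irrefl _)
  | top => exact absurd h' (not_lt.2 le_top)

lemma limsup_coe_le_of_sub {l : Filter ℝ} {f g : ℝ → ℝ}
    (h : Tendsto (fun x => f x - g x) l (𝓝 0)) :
    limsup (fun x => ((f x : ℝ) : EReal)) l ≤ limsup (fun x => ((g x : ℝ) : EReal)) l := by
  apply ereal_le_of_forall_le_add
  intro ε hε
  have hev : ∀ᶠ x in l, f x ≤ g x + ε := by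
    filter_upwards [(h.eventually (eventually_le_nhds hε) : ∀ᶠ x in l, f x - g x ≤ ε)] with x hx
    linarith
  have h2 : (ErealAddIso ε) (limsup (fun x => ((g x : ℝ) : EReal)) l)
      = limsup (fun x => (ErealAddIso ε) ((g x : ℝ) : EReal)) l :=
    (ErealAddIso ε).limsup_apply
  calc limsup (fun x => ((f x : ℝ) : EReal)) l
      ≤ limsup (fun x => (((g x + ε : ℝ)) : EReal)) l :=
        limsup_le_limsup (by filter_upwards [hev] with x hx; exact_mod_cast hx)
    _ = limsup (fun x => ((g x : ℝ) : EReal)) l + (ε : EReal) := by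
        simp only [ErealAddIso_apply] at h2
        rw [show (fun x => ((g x + ε : ℝ) : EReal))
            = (fun x => ((g x : ℝ) : EReal) + (ε : EReal)) from funext fun x => by norm_cast]
        exact h2.symm

lemma limsup_coe_congr {l : Filter ℝ} {f g : ℝ → ℝ}
    (h : Tendsto (fun x => f x - g x) l (𝓝 0)) :
    limsup (fun x => ((f x : ℝ) : EReal)) l = limsup (fun x => ((g x : ℝ) : EReal)) l := by
  refine le_antisymm (limsup_coe_le_of_sub h) (limsup_coe_le_of_sub ?_)
  have : (fun x => g x - f x) = fun x => -(f x - g x) := by ext x; ring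
  rw [this]
  simpa using h.neg

/-! ### Auxiliary lemmas for the main theorem -/

section Aux

variable {Δ : ℝ≥0} {n : ℕ}

lemma shiftSeg_apply (φ : Hist Δ n) (w : Vec n) (h : ℝ) (τ : Icc (-(Δ : ℝ)) (0 : ℝ)) :
    shiftSeg φ w h τ
      = φ (projIcc (-(Δ : ℝ)) 0 (neg_nonpos.mpr Δ.coe_nonneg) (τ.1 + h)) + max (h + τ.1) 0 • w :=
  rfl

lemma shiftSeg_zero (φ : Hist Δ n) (w : Vec n) : shiftSeg φ w 0 = φ := by
  ext τ
  rw [shiftSeg_apply]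
  have h1 : τ.1 + 0 ∈ Icc (-(Δ : ℝ)) (0 : ℝ) := by
    simpa using τ.2
  rw [projIcc_of_mem _ h1]
  have h2 : max (0 + τ.1) 0 = 0 := max_eq_right (by simpa using τ.2.2)
  rw [h2, zero_smul, add_zero]
  have h3 : (⟨τ.1 + 0, h1⟩ : Icc (-(Δ : ℝ)) (0 : ℝ)) = τ := Subtype.ext (add_zero _)
  rw [h3]

lemma tendsto_shiftSeg (φ : Hist Δ n) (w : Vec n) :
    Tendsto (fun h => shiftSeg φ w h) (𝓝 (0 : ℝ)) (𝓝 φ) := by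
  set F : ContinuousMap (ℝ × Icc (-(Δ : ℝ)) (0 : ℝ)) (Vec n) :=
    { toFun := fun p =>
        φ (projIcc (-(Δ : ℝ)) 0 (neg_nonpos.mpr Δ.coe_nonneg) (p.2.1 + p.1))
          + max (p.1 + p.2.1) 0 • w
      continuous_toFun := by
        refine Continuous.add ?_ ?_
        · exact φ.continuous.comp (continuous_projIcc.comp
            ((continuous_subtype_val.comp continuous_snd).add continuous_fst))
        · exact ((continuous_fst.add (continuous_subtype_val.comp continuous_snd)).max
            continuous_const).smul continuous_const } with hF
  have hcur : ∀ h : ℝ, shiftSeg φ w h = F.curry h := by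
    intro h
    ext τ
    rfl
  have hcont : Continuous fun h : ℝ => F.curry h := F.curry.continuous
  have := hcont.tendsto 0
  rw [show F.curry 0 = φ by rw [← hcur 0, shiftSeg_zero]] at this
  exact this.congr fun h => (hcur h).symm

end Aux

/-- Along the maximal solution, the upper right Dini derivative of
`ν(t) = V(x_t)` coincides almost everywhere with Driver's derivative
`D⁺V(x_t, f(x_t, u(t)))`. -/
theorem dini_eq_driver_ae
    (Δ : ℝ≥0) (n m : ℕ) (f : Hist Δ n → Vec m → Vec n)
    (hf : LipOnBounded f) (hf0 : f 0 0 = 0)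
    (V : Hist Δ n → ℝ) (hVnonneg : ∀ φ, 0 ≤ V φ) (hVlip : LocallyLipV V)
    (x₀ : Hist Δ n) (u : ℝ → Vec m) (hu : IsInput u)
    (tmax : EReal) (x : ℝ → Vec n) (hx : IsMaxSolution Δ f u x₀ tmax x) :
    ∀ᵐ (t : ℝ) ∂(volume : Measure ℝ), 0 ≤ t → (t : EReal) < tmax →
      diniD (fun s => V (seg Δ x s)) t
        = driverD V (seg Δ x t) (f (seg Δ x t) (u t)) := by
  classical
  obtain ⟨hsol, -⟩ := hx
  set g : ℝ → Vec n := fun s => f (seg Δ x s) (u s) with hg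
  have hxint : ∀ a b : ℝ, 0 ≤ a → a ≤ b → (b : EReal) < tmax →
      x b - x a = ∫ s in a..b, g s := by
    intro a b ha hab hb
    have hab' : (a : EReal) ≤ (b : EReal) := EReal.coe_le_coe_iff.2 hab
    have hia := hsol.integrable a ha (lt_of_le_of_lt hab' hb)
    have hib := hsol.integrable b (ha.trans hab) hb
    rw [hsol.integral_eq b (ha.trans hab) hb, hsol.integral_eq a ha (lt_of_le_of_lt hab' hb)]
    rw [add_sub_add_left_eq_sub]
    exact intervalIntegral.integral_interval_sub_left hib hia
  have key : ∀ q : ℚ, ((q : ℝ) : EReal) < tmax →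
      ∀ᵐ t ∂(volume : Measure ℝ), 0 ≤ t → t < (q : ℝ) →
        diniD (fun s => V (seg Δ x s)) t
          = driverD V (seg Δ x t) (f (seg Δ x t) (u t)) := by
    intro q hqmax
    set T : ℝ := (q : ℝ) with hT
    rcases le_or_gt T 0 with hT0 | hT0
    · exact Eventually.of_forall fun t h1 h2 => absurd (h1.trans_lt h2) (not_lt.2 hT0)
    have hsubT : ∀ s : ℝ, s ≤ T → (s : EReal) < tmax := fun s hs =>
      lt_of_le_of_lt (EReal.coe_le_coe_iff.2 hs) hqmax
    have hxcont : ContinuousOn x (Icc (-(Δ : ℝ)) T) := by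
      apply hsol.cont.mono
      intro s hs
      exact ⟨hs.1, hsubT s hs.2⟩
    have hgT : IntervalIntegrable g volume 0 T := hsol.integrable T hT0.le hqmax
    have hgIcc : IntegrableOn g (Icc 0 T) volume :=
      (intervalIntegrable_iff_integrableOn_Icc_of_le hT0.le).1 hgT
    set G : ℝ → Vec n := (Icc (0 : ℝ) T).indicator g with hGdef
    have hGi : Integrable G volume := (integrable_indicator_iff measurableSet_Icc).2 hgIcc
    have hleb := (Besicovitch.vitaliFamily (volume : Measure ℝ)).ae_tendsto_average_norm_sub
      hGi.locallyIntegrable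
    filter_upwards [hleb] with t ht h0t htT
    replace ht := ht.comp (Besicovitch.tendsto_filterAt volume t)
    have hGt : G t = g t :=
      indicator_of_mem (show t ∈ Icc (0 : ℝ) T from ⟨h0t, htT.le⟩) g
    set φ : Hist Δ n := seg Δ x t with hφ
    set w : Vec n := f (seg Δ x t) (u t) with hw
    have hgtw : g t = w := rfl
    -- evaluation of history segments
    have hsegval : ∀ s : ℝ, 0 ≤ s → s ≤ T → ∀ τ : Icc (-(Δ : ℝ)) (0 : ℝ),
        seg Δ x s τ = x (s + τ.1) := by
      intro s h0 hsT τ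
      have hc : ContinuousOn x (Icc (s - (Δ : ℝ)) s) := by
        apply hxcont.mono
        intro y hy
        simp only [mem_Icc] at hy ⊢
        constructor <;> linarith [hy.1, hy.2]
      unfold seg
      rw [dif_pos hc]
      rfl
    -- interval integrability of g on subintervals of [0, T]
    have hgsub : ∀ a b : ℝ, 0 ≤ a → a ≤ b → b ≤ T → IntervalIntegrable g volume a b := by
      intro a b ha hab hbT
      have : IntegrableOn g (uIcc a b) volume := by
        rw [uIcc_of_le hab]
        exact hgIcc.mono_set (Icc_subset_Icc ha hbT)
      exact this.intervalIntegrable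
    -- the error integral
    set E : ℝ → ℝ := fun h => ∫ s in t..t + h, ‖g s - g t‖ with hE
    have hEnonneg : ∀ h : ℝ, 0 ≤ h → 0 ≤ E h := fun h hh =>
      intervalIntegral.integral_nonneg (by linarith) fun s _ => norm_nonneg _
    have hIoc_mem : Ioc (0 : ℝ) (T - t) ∈ 𝓝[>] (0 : ℝ) :=
      Ioc_mem_nhdsGT_of_mem ⟨le_rfl, by linarith⟩
    have hEle : ∀ h ∈ Ioc (0 : ℝ) (T - t),
        E h ≤ ∫ y in Metric.closedBall t h, ‖G y - G t‖ := by
      intro h hh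
      have h1 : E h = ∫ s in t..t + h, ‖G s - G t‖ := by
        apply intervalIntegral.integral_congr
        intro s hs
        rw [uIcc_of_le (by linarith [hh.1] : t ≤ t + h)] at hs
        have hsIcc : s ∈ Icc (0 : ℝ) T := ⟨by linarith [hs.1], by linarith [hs.2, hh.2]⟩
        simp only [hGdef]
        rw [indicator_of_mem hsIcc, indicator_of_mem (show t ∈ Icc (0 : ℝ) T from ⟨h0t, htT.le⟩)]
      have hGnorm_int : IntegrableOn (fun y => ‖G y - G t‖) (Metric.closedBall t h) volume := by
        apply Integrable.norm
        exact hGi.integrableOn.sub (integrableOn_const measure_closedBall_lt_top.ne)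
      rw [h1, intervalIntegral.integral_of_le (by linarith [hh.1] : t ≤ t + h)]
      apply setIntegral_mono_set hGnorm_int
      · exact Eventually.of_forall fun y => norm_nonneg _
      · apply HasSubset.Subset.eventuallyLE
        intro y hy
        rw [Metric.mem_closedBall, Real.dist_eq, abs_le]
        constructor <;> linarith [hy.1.le, hy.2, hh.1.le]
    have hE0 : Tendsto (fun h => E h / h) (𝓝[>] (0 : ℝ)) (𝓝 0) := by
      have h2avg : Tendsto (fun h => 2 * ⨍ y in Metric.closedBall t h, ‖G y - G t‖)
          (𝓝[>] (0 : ℝ)) (𝓝 0) := by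
        have := ht.const_mul (2 : ℝ)
        simpa [Function.comp] using this
      refine squeeze_zero' ?_ ?_ h2avg
      · filter_upwards [self_mem_nhdsWithin] with h hh
        exact div_nonneg (hEnonneg h (le_of_lt hh)) (le_of_lt hh)
      · filter_upwards [hIoc_mem, self_mem_nhdsWithin] with h hh hpos
        have hball : (volume (Metric.closedBall t h)).toReal = 2 * h := by
          rw [Real.volume_closedBall]
          exact ENNReal.toReal_ofReal (by linarith [hh.1.le])
        have havg : ∫ y in Metric.closedBall t h, ‖G y - G t‖
            = (2 * h) * ⨍ y in Metric.closedBall t h, ‖G y - G t‖ := by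
          rw [setAverage_eq, smul_eq_mul, measureReal_def, hball, ← mul_assoc,
            mul_inv_cancel₀ (mul_ne_zero two_ne_zero (ne_of_gt hh.1)), one_mul]
        have := hEle h hh
        rw [havg] at this
        rw [div_le_iff₀ hh.1]
        calc E h ≤ 2 * h * ⨍ y in Metric.closedBall t h, ‖G y - G t‖ := this
          _ = 2 * (⨍ y in Metric.closedBall t h, ‖G y - G t‖) * h := by ring
    -- the key pointwise bound
    have hKey : ∀ h ∈ Ioc (0 : ℝ) (T - t), ‖seg Δ x (t + h) - shiftSeg φ w h‖ ≤ E h := by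
      intro h hh
      rw [ContinuousMap.norm_le _ (hEnonneg h hh.1.le)]
      intro τ
      rw [ContinuousMap.sub_apply, hsegval (t + h) (by linarith [hh.1.le]) (by linarith [hh.2]) τ,
        shiftSeg_apply]
      rcases le_or_gt (τ.1 + h) 0 with hcase | hcase
      · have hmem : τ.1 + h ∈ Icc (-(Δ : ℝ)) (0 : ℝ) := ⟨by linarith [τ.2.1, hh.1.le], hcase⟩
        rw [projIcc_of_mem _ hmem]
        have hφτ : φ ⟨τ.1 + h, hmem⟩ = x (t + (τ.1 + h)) :=
          hsegval t h0t htT.le ⟨τ.1 + h, hmem⟩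
        rw [hφτ, max_eq_right (by linarith : h + τ.1 ≤ 0), zero_smul, add_zero,
          show t + h + τ.1 = t + (τ.1 + h) by ring, sub_self, norm_zero]
        exact hEnonneg h hh.1.le
      · rw [projIcc_of_right_le (neg_nonpos.mpr Δ.coe_nonneg) (by linarith : (0 : ℝ) ≤ τ.1 + h)]
        have hφ0 : φ ⟨(0 : ℝ), right_mem_Icc.2 (neg_nonpos.mpr Δ.coe_nonneg)⟩ = x t := by
          rw [hsegval t h0t htT.le, add_zero]
        rw [hφ0, max_eq_left (by linarith : (0 : ℝ) ≤ h + τ.1)]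
        set b : ℝ := t + h + τ.1 with hb
        have htb : t ≤ b := by simp only [hb]; linarith
        have hbT : b ≤ T := by simp only [hb]; have := τ.2.2; linarith [hh.2]
        have hxb : x b - x t = ∫ s in t..b, g s := hxint t b h0t htb (hsubT b hbT)
        have hgint_tb : IntervalIntegrable g volume t b := hgsub t b h0t htb hbT
        have hconst : (h + τ.1) • w = ∫ _ in t..b, w := by
          rw [intervalIntegral.integral_const]
          congr 1
          simp only [hb]; ring
        have heq : x (t + h + τ.1) - (x t + (h + τ.1) • w) = ∫ s in t..b, (g s - w) := by
          rw [intervalIntegral.integral_sub hgint_tb intervalIntegrable_const, ← hxb, hconst]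
          abel
        rw [heq]
        calc ‖∫ s in t..b, (g s - w)‖ ≤ ∫ s in t..b, ‖g s - w‖ :=
              intervalIntegral.norm_integral_le_integral_norm htb
          _ ≤ ∫ s in t..t + h, ‖g s - w‖ := by
              apply intervalIntegral.integral_mono_interval le_rfl htb
                (by simp only [hb]; have := τ.2.2; linarith)
                (Eventually.of_forall fun s => norm_nonneg _)
              exact ((hgsub t (t + h) h0t (by linarith [hh.1.le]) (by linarith [hh.2])).sub
                intervalIntegrable_const).norm
          _ = E h := by rw [hE, hgtw]
    -- local Lipschitz data for V at φ
    obtain ⟨δ, hδ, L, hL, hLip⟩ := hVlip φ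
    have hshift0 : Tendsto (fun h => shiftSeg φ w h) (𝓝[>] (0 : ℝ)) (𝓝 φ) :=
      (tendsto_shiftSeg φ w).mono_left nhdsWithin_le_nhds
    have hEto0 : Tendsto E (𝓝[>] (0 : ℝ)) (𝓝 0) := by
      have hid : Tendsto (fun h : ℝ => h) (𝓝[>] (0 : ℝ)) (𝓝 0) :=
        tendsto_id.mono_left nhdsWithin_le_nhds
      have := hE0.mul hid
      rw [zero_mul] at this
      apply this.congr'
      filter_upwards [self_mem_nhdsWithin] with h hh
      rw [div_mul_cancel₀ _ (ne_of_gt (mem_Ioi.mp hh))]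
    have hD : Tendsto (fun h => (V (seg Δ x (t + h)) - V (shiftSeg φ w h)) / h)
        (𝓝[>] (0 : ℝ)) (𝓝 0) := by
      have hLE0 : Tendsto (fun h => L * (E h / h)) (𝓝[>] (0 : ℝ)) (𝓝 0) := by
        have := hE0.const_mul L
        simpa using this
      apply squeeze_zero_norm' _ hLE0
      have hev1 : ∀ᶠ h in 𝓝[>] (0 : ℝ), ‖shiftSeg φ w h - φ‖ ≤ δ / 2 := by
        filter_upwards [Metric.tendsto_nhds.mp hshift0 (δ / 2) (by linarith)] with h hh
        rw [dist_eq_norm] at hh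
        exact hh.le
      have hev2 : ∀ᶠ h in 𝓝[>] (0 : ℝ), E h ≤ δ / 2 :=
        hEto0.eventually (eventually_le_nhds (by linarith))
      filter_upwards [hIoc_mem, hev1, hev2] with h hh h1 h2
      have hkey := hKey h hh
      have hin1 : ‖shiftSeg φ w h - φ‖ ≤ δ := h1.trans (by linarith)
      have hin2 : ‖seg Δ x (t + h) - φ‖ ≤ δ := by
        calc ‖seg Δ x (t + h) - φ‖
            ≤ ‖seg Δ x (t + h) - shiftSeg φ w h‖ + ‖shiftSeg φ w h - φ‖ :=
              norm_sub_le_norm_sub_add_norm_sub _ _ _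
          _ ≤ E h + δ / 2 := add_le_add hkey h1
          _ ≤ δ := by linarith
      have hVdiff : |V (seg Δ x (t + h)) - V (shiftSeg φ w h)| ≤ L * E h :=
        le_trans (hLip _ _ hin2 hin1) (by
          have := mul_le_mul_of_nonneg_left hkey hL.le
          linarith)
      rw [Real.norm_eq_abs, abs_div, abs_of_pos hh.1, ← mul_div_assoc]
      exact (div_le_div_iff_of_pos_right hh.1).mpr hVdiff
    -- conclude via the limsup congruence lemma
    show diniD (fun s => V (seg Δ x s)) t = driverD V φ w
    unfold diniD driverD
    apply limsup_coe_congr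
    have heq : (fun h : ℝ => (V (seg Δ x (t + h)) - V (seg Δ x t)) / h
        - (V (shiftSeg φ w h) - V φ) / h)
        = fun h => (V (seg Δ x (t + h)) - V (shiftSeg φ w h)) / h := by
      funext h
      rw [← hφ]
      ring
    rw [heq]
    exact hD
  have hae : ∀ᵐ t ∂(volume : Measure ℝ), ∀ q : ℚ, ((q : ℝ) : EReal) < tmax →
      0 ≤ t → t < (q : ℝ) →
        diniD (fun s => V (seg Δ x s)) t
          = driverD V (seg Δ x t) (f (seg Δ x t) (u t)) := by
    rw [ae_all_iff]
    intro q
    by_cases hq : ((q : ℝ) : EReal) < tmax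
    · filter_upwards [key q hq] with t ht _ using ht
    · exact Eventually.of_forall fun t h => absurd h hq
  filter_upwards [hae] with t ht h0t htmax
  obtain ⟨q, hq1, hq2⟩ := EReal.exists_rat_btwn_of_lt htmax
  exact ht q hq2 h0t (by exact_mod_cast hq1)
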